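/- Let I, J, K be a partition of {1,…,n} and let X_0 ⊆ X be such that Span{u(x) : x ∈ X_0} = V. If for every x ∈ X_0 there exist functions f, g with P(y|x) = f(y_I, y_K) · g(y_J, y_K) for all y ∈ Y, then v_H = 0 for every H ⊆ {1,…,n} with H ∩ I ≠ ∅ and H ∩ J ≠ ∅; consequently, for every x ∈ X there exist functions f, g with P(y|x) = f(y_I, y_K) · g(y_J, y_K) for all y ∈ Y. -/

import Mathlib

open Finset
open scoped RealInnerProductSpace

/-- Averaging operator π_J. -/
noncomputable def piAvg {ι : Type*} [Fintype ι] [DecidableEq ι] {Z : ι → Type*}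
    [∀ i, Fintype (Z i)] [∀ i, DecidableEq (Z i)] {V : Type*} [AddCommGroup V] [Module ℝ V]
    (J : Finset ι) (w : (∀ i, Z i) → V) : (∀ i, Z i) → V :=
  fun z => (∏ i ∈ Jᶜ, (Fintype.card (Z i) : ℝ))⁻¹ •
    ∑ z' ∈ Finset.univ.filter (fun z' : ∀ i, Z i => ∀ i ∈ J, z' i = z i), w z'

/-- Interaction projection Q_I. -/
noncomputable def Qop {ι : Type*} [Fintype ι] [DecidableEq ι] {Z : ι → Type*}
    [∀ i, Fintype (Z i)] [∀ i, DecidableEq (Z i)] {V : Type*} [AddCommGroup V] [Module ℝ V]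
    (I : Finset ι) (w : (∀ i, Z i) → V) : (∀ i, Z i) → V :=
  ∑ J ∈ I.powerset, ((-1 : ℝ) ^ (I \ J).card) • piAvg J w

section helpers

variable {ι : Type*} [Fintype ι] [DecidableEq ι] {Z : ι → Type*}
  [∀ i, Fintype (Z i)] [∀ i, DecidableEq (Z i)]
  {V : Type*} [AddCommGroup V] [Module ℝ V]

lemma filter_agree_eq_piFinset (A : Finset ι) (y : ∀ i, Z i) :
    (Finset.univ.filter fun z : ∀ i, Z i => ∀ i ∈ A, z i = y i)
      = Fintype.piFinset fun i => if i ∈ A then {y i} else Finset.univ := by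
  ext z
  simp only [mem_filter, mem_univ, true_and, Fintype.mem_piFinset]
  constructor
  · intro h i
    by_cases hi : i ∈ A <;> simp [hi, h]
  · intro h i hi
    have := h i
    simpa [hi] using this

lemma card_agree (A : Finset ι) (y : ∀ i, Z i) :
    (Finset.univ.filter fun z : ∀ i, Z i => ∀ i ∈ A, z i = y i).card
      = ∏ i ∈ Aᶜ, Fintype.card (Z i) := by
  rw [filter_agree_eq_piFinset, Fintype.card_piFinset]
  rw [← Finset.prod_mul_prod_compl A]
  have h1 : ∏ i ∈ A, (if i ∈ A then ({y i} : Finset (Z i)) else Finset.univ).card = 1 :=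
    Finset.prod_eq_one fun i hi => by simp [hi]
  have h2 : ∏ i ∈ Aᶜ, (if i ∈ A then ({y i} : Finset (Z i)) else Finset.univ).card
      = ∏ i ∈ Aᶜ, Fintype.card (Z i) :=
    Finset.prod_congr rfl fun i hi => by
      simp [Finset.mem_compl.mp hi, Finset.card_univ]
  rw [h1, h2, one_mul]

lemma prod_card_pos [∀ i, Nonempty (Z i)] (A : Finset ι) :
    (0:ℝ) < ∏ i ∈ A, (Fintype.card (Z i) : ℝ) :=
  Finset.prod_pos fun i _ => by exact_mod_cast Fintype.card_pos

lemma piAvg_inter [∀ i, Nonempty (Z i)] (S J : Finset ι)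
    (w : (∀ i, Z i) → V)
    (hw : ∀ y y', (∀ i ∈ S, y i = y' i) → w y = w y') :
    piAvg J w = piAvg (J ∩ S) w := by
  funext y
  unfold piAvg
  have hmaps : ∀ z ∈ Finset.univ.filter (fun z : ∀ i, Z i => ∀ i ∈ J ∩ S, z i = y i),
      (fun i => if i ∈ J then y i else z i) ∈
        Finset.univ.filter (fun z' : ∀ i, Z i => ∀ i ∈ J, z' i = y i) := by
    intro z _
    simp only [Finset.mem_filter, Finset.mem_univ, true_and]
    intro i hi
    simp [hi]
  have key := Finset.sum_fiberwise_of_maps_to hmaps w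
  have hcompl : ((J ∩ S) ∪ Jᶜ)ᶜ = J \ S := by
    ext x
    simp only [Finset.mem_compl, Finset.mem_union, Finset.mem_inter, Finset.mem_sdiff]
    tauto
  have hfiber : ∀ b ∈ Finset.univ.filter (fun z' : ∀ i, Z i => ∀ i ∈ J, z' i = y i),
      ((Finset.univ.filter (fun z : ∀ i, Z i => ∀ i ∈ J ∩ S, z i = y i)).filter
          (fun z => (fun i => if i ∈ J then y i else z i) = b))
        = Finset.univ.filter (fun z : ∀ i, Z i => ∀ i ∈ (J ∩ S) ∪ Jᶜ, z i = b i) := by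
    intro b hb
    rw [Finset.mem_filter] at hb
    ext z
    simp only [Finset.mem_filter, Finset.mem_univ, true_and, funext_iff]
    constructor
    · rintro ⟨h1, h2⟩ i hi
      rcases Finset.mem_union.mp hi with hi' | hi'
      · rw [← h2 i, if_pos (Finset.mem_inter.mp hi').1]
        exact h1 i hi'
      · rw [← h2 i, if_neg (Finset.mem_compl.mp hi')]
    · intro hz
      refine ⟨fun i hi => ?_, fun i => ?_⟩
      · rw [hz i (Finset.mem_union_left _ hi)]
        exact hb.2 i (Finset.mem_inter.mp hi).1
      · by_cases hiJ : i ∈ J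
        · rw [if_pos hiJ]; exact (hb.2 i hiJ).symm
        · rw [if_neg hiJ]; exact hz i (Finset.mem_union_right _ (Finset.mem_compl.mpr hiJ))
  have hinner : ∀ b ∈ Finset.univ.filter (fun z' : ∀ i, Z i => ∀ i ∈ J, z' i = y i),
      ∑ z ∈ ((Finset.univ.filter (fun z : ∀ i, Z i => ∀ i ∈ J ∩ S, z i = y i)).filter
          (fun z => (fun i => if i ∈ J then y i else z i) = b)),
        w z = (∏ i ∈ J \ S, Fintype.card (Z i)) • w b := by
    intro b hb
    rw [hfiber b hb]
    have hwcongr : ∀ z ∈ Finset.univ.filter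
        (fun z : ∀ i, Z i => ∀ i ∈ (J ∩ S) ∪ Jᶜ, z i = b i), w z = w b := by
      intro z hz
      rw [Finset.mem_filter] at hz
      refine hw z b fun i hi => ?_
      by_cases hiJ : i ∈ J
      · exact hz.2 i (Finset.mem_union_left _ (Finset.mem_inter.mpr ⟨hiJ, hi⟩))
      · exact hz.2 i (Finset.mem_union_right _ (Finset.mem_compl.mpr hiJ))
    rw [Finset.sum_congr rfl hwcongr, Finset.sum_const, card_agree, hcompl]
  rw [Finset.sum_congr rfl hinner] at key
  rw [← key]
  rw [Finset.sum_congr rfl (fun b _ => (Nat.cast_smul_eq_nsmul ℝ _ _).symm :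
    ∀ b ∈ Finset.univ.filter (fun z' : ∀ i, Z i => ∀ i ∈ J, z' i = y i),
      (∏ i ∈ J \ S, Fintype.card (Z i)) • w b
        = ((∏ i ∈ J \ S, Fintype.card (Z i) : ℕ) : ℝ) • w b)]
  rw [← Finset.smul_sum, smul_smul]
  congr 1
  have hsplit : (J ∩ S)ᶜ = Jᶜ ∪ (J \ S) := by
    ext x
    simp only [Finset.mem_compl, Finset.mem_union, Finset.mem_inter, Finset.mem_sdiff]
    tauto
  have hdisj : Disjoint (Jᶜ) (J \ S) := by
    rw [Finset.disjoint_left]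
    intro x hx hx'
    exact (Finset.mem_compl.mp hx) (Finset.mem_sdiff.mp hx').1
  rw [hsplit, Finset.prod_union hdisj, Nat.cast_prod]
  have h1 : (0:ℝ) < ∏ i ∈ Jᶜ, (Fintype.card (Z i) : ℝ) := prod_card_pos _
  have h2 : (0:ℝ) < ∏ i ∈ J \ S, (Fintype.card (Z i) : ℝ) := prod_card_pos _
  field_simp

lemma Qop_eq_zero_of_depends [∀ i, Nonempty (Z i)] (S H : Finset ι) {i₀ : ι}
    (hi₀H : i₀ ∈ H) (hi₀S : i₀ ∉ S) (w : (∀ i, Z i) → V)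
    (hw : ∀ y y', (∀ i ∈ S, y i = y' i) → w y = w y') :
    Qop H w = 0 := by
  have hrw : ∀ J ∈ H.powerset, ((-1:ℝ) ^ (H \ J).card) • piAvg J w
      = ((-1:ℝ) ^ (H \ J).card) • piAvg (J ∩ S) w := fun J _ => by
    rw [piAvg_inter S J w hw]
  unfold Qop
  rw [Finset.sum_congr rfl hrw]
  have hi₀E : i₀ ∉ H.erase i₀ := Finset.notMem_erase _ _
  rw [show H = insert i₀ (H.erase i₀) from (Finset.insert_erase hi₀H).symm,
    Finset.sum_powerset_insert hi₀E, ← Finset.sum_add_distrib]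
  apply Finset.sum_eq_zero
  intro t ht
  rw [Finset.mem_powerset] at ht
  have hti₀ : i₀ ∉ t := fun h => hi₀E (ht h)
  have h1 : insert i₀ (H.erase i₀) \ t = insert i₀ (H.erase i₀ \ t) :=
    Finset.insert_sdiff_of_notMem _ hti₀
  have h2 : insert i₀ (H.erase i₀) \ insert i₀ t = H.erase i₀ \ t := by
    rw [Finset.insert_sdiff_insert]
    ext x
    simp only [Finset.mem_sdiff, Finset.mem_insert]
    constructor
    · rintro ⟨hx, hx'⟩; exact ⟨hx, fun h => hx' (Or.inr h)⟩
    · rintro ⟨hx, hx'⟩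
      exact ⟨hx, fun h => h.elim (fun h' => hi₀E (h' ▸ hx)) hx'⟩
  have h3 : (insert i₀ t) ∩ S = t ∩ S := by
    ext x
    simp only [Finset.mem_inter, Finset.mem_insert]
    constructor
    · rintro ⟨rfl | hx, hS⟩
      · exact absurd hS hi₀S
      · exact ⟨hx, hS⟩
    · rintro ⟨hx, hS⟩; exact ⟨Or.inr hx, hS⟩
  have h4 : i₀ ∉ H.erase i₀ \ t := fun h => hi₀E (Finset.mem_sdiff.mp h).1
  rw [h1, h2, h3, Finset.card_insert_of_notMem h4, pow_succ, mul_neg_one, neg_smul,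
    neg_add_cancel]

lemma piAvg_congr (Jf : Finset ι) (w : (∀ i, Z i) → V) {y y' : ∀ i, Z i}
    (h : ∀ i ∈ Jf, y i = y' i) : piAvg Jf w y = piAvg Jf w y' := by
  unfold piAvg
  congr 2
  apply Finset.filter_congr
  intro z _
  constructor <;> intro hz i hi
  · rw [← h i hi]; exact hz i hi
  · rw [h i hi]; exact hz i hi

lemma Qop_congr (H : Finset ι) (w : (∀ i, Z i) → V) {y y' : ∀ i, Z i}
    (h : ∀ i ∈ H, y i = y' i) : Qop H w y = Qop H w y' := by
  unfold Qop
  rw [Finset.sum_apply, Finset.sum_apply]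
  refine Finset.sum_congr rfl fun Jf hJf => ?_
  rw [Finset.mem_powerset] at hJf
  rw [Pi.smul_apply, Pi.smul_apply, piAvg_congr Jf w (fun i hi => h i (hJf hi))]

lemma Qop_add (H : Finset ι) (w₁ w₂ : (∀ i, Z i) → V) :
    Qop H (fun y => w₁ y + w₂ y) = fun y => Qop H w₁ y + Qop H w₂ y := by
  funext y
  unfold Qop
  simp only [Finset.sum_apply, Pi.smul_apply, ← Finset.sum_add_distrib, ← smul_add]
  refine Finset.sum_congr rfl fun Jf _ => ?_
  congr 1
  unfold piAvg
  rw [← smul_add, ← Finset.sum_add_distrib]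

lemma inner_piAvg {W : Type*} [NormedAddCommGroup W] [InnerProductSpace ℝ W]
    (c : W) (Jf : Finset ι) (w : (∀ i, Z i) → W) (y : ∀ i, Z i) :
    ⟪c, piAvg Jf w y⟫ = piAvg Jf (fun z => ⟪c, w z⟫) y := by
  unfold piAvg
  rw [real_inner_smul_right, inner_sum, smul_eq_mul]

lemma inner_Qop {W : Type*} [NormedAddCommGroup W] [InnerProductSpace ℝ W]
    (c : W) (H : Finset ι) (w : (∀ i, Z i) → W) (y : ∀ i, Z i) :
    ⟪c, Qop H w y⟫ = Qop H (fun z => ⟪c, w z⟫) y := by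
  unfold Qop
  rw [Finset.sum_apply, inner_sum, Finset.sum_apply]
  refine Finset.sum_congr rfl fun Jf _ => ?_
  rw [Pi.smul_apply, Pi.smul_apply, real_inner_smul_right, inner_piAvg, smul_eq_mul]

lemma piAvg_univ (w : (∀ i, Z i) → V) : piAvg (Finset.univ : Finset ι) w = w := by
  funext y
  unfold piAvg
  have h : Finset.univ.filter (fun z : ∀ i, Z i => ∀ i ∈ Finset.univ, z i = y i) = {y} := by
    ext z
    simp [funext_iff]
  rw [h, Finset.compl_univ, Finset.prod_empty, inv_one, one_smul, Finset.sum_singleton]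

lemma sum_Qop (w : (∀ i, Z i) → V) :
    ∑ H ∈ (Finset.univ : Finset ι).powerset, Qop H w = w := by
  have step1 : ∀ H ∈ (Finset.univ : Finset ι).powerset,
      Qop H w = ∑ Jf ∈ (Finset.univ : Finset ι).powerset,
        (if Jf ⊆ H then ((-1:ℝ) ^ (H \ Jf).card) else 0) • piAvg Jf w := by
    intro H _
    unfold Qop
    have hps : H.powerset = (Finset.univ : Finset ι).powerset.filter (fun Jf => Jf ⊆ H) := by
      ext Jf
      simp [Finset.mem_powerset, Finset.subset_univ]
    rw [hps, Finset.sum_filter]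
    refine Finset.sum_congr rfl fun Jf _ => ?_
    split <;> simp
  rw [Finset.sum_congr rfl step1, Finset.sum_comm]
  have step2 : ∀ Jf ∈ (Finset.univ : Finset ι).powerset,
      ∑ H ∈ (Finset.univ : Finset ι).powerset,
        (if Jf ⊆ H then ((-1:ℝ) ^ (H \ Jf).card) else 0) • piAvg Jf w
      = (if Jf = Finset.univ then (1:ℝ) else 0) • piAvg Jf w := by
    intro Jf _
    rw [← Finset.sum_smul]
    congr 1
    rw [← Finset.sum_filter]
    have hbij : ∑ H ∈ (Finset.univ : Finset ι).powerset.filter (fun H => Jf ⊆ H),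
        ((-1:ℝ) ^ (H \ Jf).card) = ∑ T ∈ (Jfᶜ).powerset, ((-1:ℝ) ^ T.card) := by
      refine Finset.sum_nbij' (fun H => H \ Jf) (fun T => T ∪ Jf) ?_ ?_ ?_ ?_ ?_
      · intro H hH
        rw [Finset.mem_filter] at hH
        rw [Finset.mem_powerset]
        intro x hx
        rw [Finset.mem_sdiff] at hx
        exact Finset.mem_compl.mpr hx.2
      · intro T hT
        rw [Finset.mem_powerset] at hT
        rw [Finset.mem_filter]
        exact ⟨Finset.mem_powerset.mpr (Finset.subset_univ _), Finset.subset_union_right⟩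
      · intro H hH
        rw [Finset.mem_filter] at hH
        show H \ Jf ∪ Jf = H
        exact Finset.sdiff_union_of_subset hH.2
      · intro T hT
        rw [Finset.mem_powerset] at hT
        show (T ∪ Jf) \ Jf = T
        rw [Finset.union_sdiff_right]
        exact Finset.sdiff_eq_self_of_disjoint
          (Finset.disjoint_left.mpr fun x hx hx' => Finset.mem_compl.mp (hT hx) hx')
      · intro H _
        rfl
    rw [hbij]
    have : ∑ T ∈ (Jfᶜ).powerset, ((-1:ℝ) ^ T.card)
        = (((∑ T ∈ (Jfᶜ).powerset, ((-1:ℤ) ^ T.card)) : ℤ) : ℝ) := by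
      push_cast
      rfl
    rw [this, Finset.sum_powerset_neg_one_pow_card]
    by_cases h : Jf = Finset.univ
    · simp [h]
    · have : Jfᶜ ≠ ∅ := by
        intro hc
        exact h (by simpa [Finset.compl_eq_empty_iff] using hc)
      simp [this, h]
  rw [Finset.sum_congr rfl step2]
  rw [Finset.sum_eq_single (Finset.univ : Finset ι)]
  · simp [piAvg_univ]
  · intro Jf _ hJf
    simp [hJf]
  · intro h
    exact absurd (Finset.mem_powerset.mpr (Finset.subset_univ _)) h

end helpers

/-- if the conditional independence factorization holds for all `x` in a set
`X₀` whose embeddings span `V`, then the interaction components `v_H` with `H` meeting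
both `I` and `J` vanish, and therefore the factorization holds for *all* `x ∈ X`. -/
theorem vH_eq_zero_of_span {n : ℕ}
    (X : Type*) [Fintype X] [Nonempty X]
    (Y : Fin n → Type*) [∀ j, Fintype (Y j)] [∀ j, Nonempty (Y j)] [∀ j, DecidableEq (Y j)]
    (V : Type*) [NormedAddCommGroup V] [InnerProductSpace ℝ V] [FiniteDimensional ℝ V]
    (u : X → V) (v : (∀ j, Y j) → V)
    (P : X → (∀ j, Y j) → ℝ)
    (hP : ∀ x y, P x y =
      Real.exp ⟪u x, v y⟫ / ∑ y' : ∀ j, Y j, Real.exp ⟪u x, v y'⟫)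
    (I J K : Finset (Fin n))
    (hIJ : Disjoint I J) (hIK : Disjoint I K) (hJK : Disjoint J K)
    (hIJK : I ∪ J ∪ K = Finset.univ)
    (X₀ : Set X) (hspan : Submodule.span ℝ (u '' X₀) = ⊤)
    (hfact : ∀ x ∈ X₀, ∃ f g : (∀ j, Y j) → ℝ,
      (∀ y y' : ∀ j, Y j, (∀ j ∈ I ∪ K, y j = y' j) → f y = f y') ∧
      (∀ y y' : ∀ j, Y j, (∀ j ∈ J ∪ K, y j = y' j) → g y = g y') ∧
      (∀ y : ∀ j, Y j, P x y = f y * g y)) :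
    (∀ H : Finset (Fin n), (H ∩ I).Nonempty → (H ∩ J).Nonempty → Qop H v = 0) ∧
    (∀ x : X, ∃ f g : (∀ j, Y j) → ℝ,
      (∀ y y' : ∀ j, Y j, (∀ j ∈ I ∪ K, y j = y' j) → f y = f y') ∧
      (∀ y y' : ∀ j, Y j, (∀ j ∈ J ∪ K, y j = y' j) → g y = g y') ∧
      (∀ y : ∀ j, Y j, P x y = f y * g y)) := by
  classical
  have hZpos : ∀ x : X, (0:ℝ) < ∑ y' : ∀ j, Y j, Real.exp ⟪u x, v y'⟫ :=
    fun x => Finset.sum_pos (fun _ _ => Real.exp_pos _) Finset.univ_nonempty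
  have part1 : ∀ H : Finset (Fin n), (H ∩ I).Nonempty → (H ∩ J).Nonempty → Qop H v = 0 := by
    intro H hHI hHJ
    obtain ⟨i₀, hi₀⟩ := hHI
    obtain ⟨j₀, hj₀⟩ := hHJ
    rw [Finset.mem_inter] at hi₀ hj₀
    have hj₀IK : j₀ ∉ I ∪ K := by
      intro h
      rcases Finset.mem_union.mp h with h' | h'
      · exact (Finset.disjoint_right.mp hIJ hj₀.2) h'
      · exact (Finset.disjoint_left.mp hJK hj₀.2) h'
    have hi₀JK : i₀ ∉ J ∪ K := by
      intro h
      rcases Finset.mem_union.mp h with h' | h'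
      · exact (Finset.disjoint_left.mp hIJ hi₀.2) h'
      · exact (Finset.disjoint_left.mp hIK hi₀.2) h'
    have key : ∀ x ∈ X₀, ∀ y, ⟪u x, Qop H v y⟫ = 0 := by
      intro x hx y
      rw [inner_Qop]
      obtain ⟨f, g, hf, hg, hfg⟩ := hfact x hx
      have hPpos : ∀ y, 0 < P x y := fun y => by
        rw [hP]
        exact div_pos (Real.exp_pos _) (hZpos x)
      have hf0 : ∀ y, f y ≠ 0 := by
        intro y h
        have := hPpos y
        rw [hfg y, h, zero_mul] at this
        exact lt_irrefl _ this
      have hg0 : ∀ y, g y ≠ 0 := by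
        intro y h
        have := hPpos y
        rw [hfg y, h, mul_zero] at this
        exact lt_irrefl _ this
      have hF : ∀ y, ⟪u x, v y⟫ = Real.log |f y| +
          (Real.log |g y| + Real.log (∑ y' : ∀ j, Y j, Real.exp ⟪u x, v y'⟫)) := by
        intro y
        have h2 : Real.log (P x y)
            = ⟪u x, v y⟫ - Real.log (∑ y' : ∀ j, Y j, Real.exp ⟪u x, v y'⟫) := by
          rw [hP x y, Real.log_div (Real.exp_ne_zero _) (ne_of_gt (hZpos x)), Real.log_exp]
        have h3 : Real.log (P x y) = Real.log |f y| + Real.log |g y| := by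
          rw [hfg y, ← Real.log_abs, abs_mul,
            Real.log_mul (abs_ne_zero.mpr (hf0 y)) (abs_ne_zero.mpr (hg0 y))]
        linarith
      have hz1 : Qop H (fun y : ∀ j, Y j => Real.log |f y|) = 0 :=
        Qop_eq_zero_of_depends (I ∪ K) H hj₀.1 hj₀IK _
          (fun y y' h => by rw [hf y y' h])
      have hz2 : Qop H (fun y : ∀ j, Y j => Real.log |g y| +
          Real.log (∑ y' : ∀ j, Y j, Real.exp ⟪u x, v y'⟫)) = 0 :=
        Qop_eq_zero_of_depends (J ∪ K) H hi₀.1 hi₀JK _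
          (fun y y' h => by rw [hg y y' h])
      have e1 : (fun y : ∀ j, Y j => ⟪u x, v y⟫)
          = fun y => Real.log |f y| + (Real.log |g y| +
              Real.log (∑ y' : ∀ j, Y j, Real.exp ⟪u x, v y'⟫)) := funext hF
      rw [e1, Qop_add]
      rw [hz1, hz2]
      simp
    funext y
    have hall : ∀ c : V, ⟪c, Qop H v y⟫ = 0 := by
      intro c
      have hc : c ∈ Submodule.span ℝ (u '' X₀) := by rw [hspan]; trivial
      induction hc using Submodule.span_induction with
      | mem c hc =>
        obtain ⟨x, hx, rfl⟩ := hc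
        exact key x hx y
      | zero => simp
      | add a b _ _ ha hb => rw [inner_add_left, ha, hb, add_zero]
      | smul r a _ ha => rw [real_inner_smul_left, ha, mul_zero]
    have h0 : Qop H v y = 0 := inner_self_eq_zero.mp (hall _)
    simpa using h0
  refine ⟨part1, fun x => ?_⟩
  set A : (∀ j, Y j) → ℝ := fun y =>
    ∑ H ∈ ((Finset.univ : Finset (Fin n)).powerset.filter fun H => H ∩ J = ∅),
      ⟪u x, Qop H v y⟫ with hAdef
  set B : (∀ j, Y j) → ℝ := fun y =>
    ∑ H ∈ ((Finset.univ : Finset (Fin n)).powerset.filter fun H => ¬ H ∩ J = ∅),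
      ⟪u x, Qop H v y⟫ with hBdef
  have hAB : ∀ y, ⟪u x, v y⟫ = A y + B y := by
    intro y
    have hv : v y = ∑ H ∈ (Finset.univ : Finset (Fin n)).powerset, Qop H v y := by
      conv_lhs => rw [← sum_Qop v]
      rw [Finset.sum_apply]
    rw [hv, inner_sum, hAdef, hBdef,
      ← Finset.sum_filter_add_sum_filter_not (Finset.univ : Finset (Fin n)).powerset
        (fun H => H ∩ J = ∅)]
  have hA : ∀ y y', (∀ j ∈ I ∪ K, y j = y' j) → A y = A y' := by
    intro y y' h
    rw [hAdef]
    refine Finset.sum_congr rfl fun H hH => ?_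
    rw [Finset.mem_filter] at hH
    have hHsub : H ⊆ I ∪ K := by
      intro i hi
      have hiu : i ∈ I ∪ J ∪ K := hIJK ▸ Finset.mem_univ i
      have hiJ : i ∉ J := fun hiJ =>
        (Finset.eq_empty_iff_forall_notMem.mp hH.2 i) (Finset.mem_inter.mpr ⟨hi, hiJ⟩)
      rcases Finset.mem_union.mp hiu with h' | h'
      · rcases Finset.mem_union.mp h' with h'' | h''
        · exact Finset.mem_union_left _ h''
        · exact absurd h'' hiJ
      · exact Finset.mem_union_right _ h'
    rw [Qop_congr H v (fun i hi => h i (hHsub hi))]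
  have hB : ∀ y y', (∀ j ∈ J ∪ K, y j = y' j) → B y = B y' := by
    intro y y' h
    rw [hBdef]
    refine Finset.sum_congr rfl fun H hH => ?_
    rw [Finset.mem_filter] at hH
    rcases (H ∩ I).eq_empty_or_nonempty with hHI | hHI
    · have hHsub : H ⊆ J ∪ K := by
        intro i hi
        have hiu : i ∈ I ∪ J ∪ K := hIJK ▸ Finset.mem_univ i
        have hiI : i ∉ I := fun hiI =>
          (Finset.eq_empty_iff_forall_notMem.mp hHI i) (Finset.mem_inter.mpr ⟨hi, hiI⟩)
        rcases Finset.mem_union.mp hiu with h' | h'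
        · rcases Finset.mem_union.mp h' with h'' | h''
          · exact absurd h'' hiI
          · exact Finset.mem_union_left _ h''
        · exact Finset.mem_union_right _ h'
      rw [Qop_congr H v (fun i hi => h i (hHsub hi))]
    · rw [part1 H hHI (Finset.nonempty_iff_ne_empty.mpr hH.2)]
      simp
  refine ⟨fun y => Real.exp (A y) / (∑ y' : ∀ j, Y j, Real.exp ⟪u x, v y'⟫),
    fun y => Real.exp (B y), ?_, ?_, ?_⟩
  · intro y y' h
    dsimp only
    rw [hA y y' h]
  · intro y y' h
    dsimp only
    rw [hB y y' h]
  · intro y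
    rw [hP x y, hAB y, Real.exp_add]
    ring
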